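/- Let E be a complex Hilbert space, let A, S, C be continuous linear maps from E to E with A and S skew-adjoint (adjoint A = −A and adjoint S = −S). Suppose that for every natural number j ≥ 0, ⁅(ad A)^[j] C, S⁆ = 0. Then for every t ∈ ℝ and every x ∈ E, ⟪exp(t • (A + S)) x, C (exp(t • (A + S)) x)⟫ = ⟪exp(t • A) x, C (exp(t • A) x)⟫. -/

import Mathlib

open NormedSpace

set_option linter.unusedSectionVars false

section BanachAlg
variable {𝔸 : Type*} [NormedRing 𝔸] [NormedAlgebra ℂ 𝔸]

noncomputable def Lm (a : 𝔸) : 𝔸 →L[ℂ] 𝔸 := ContinuousLinearMap.mul ℂ 𝔸 a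
noncomputable def Rm (a : 𝔸) : 𝔸 →L[ℂ] 𝔸 := (ContinuousLinearMap.mul ℂ 𝔸).flip a

@[simp] lemma Lm_apply (a c : 𝔸) : Lm a c = a * c := rfl
@[simp] lemma Rm_apply (a c : 𝔸) : Rm a c = c * a := rfl

lemma exp_apply_eq_tsum [CompleteSpace 𝔸] (T : 𝔸 →L[ℂ] 𝔸) (c : 𝔸) :
    exp T c = ∑' n : ℕ, ((n.factorial : ℂ))⁻¹ • (T ^ n) c := by
  have hs := expSeries_summable' (𝕂 := ℂ) T
  have h2 := (ContinuousLinearMap.apply ℂ 𝔸 c).map_tsum hs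
  rw [exp_eq_tsum ℂ]
  simpa using h2

lemma exp_eval_congr [CompleteSpace 𝔸] {T₁ T₂ : 𝔸 →L[ℂ] 𝔸} (c : 𝔸) (h : ∀ n, (T₁ ^ n) c = (T₂ ^ n) c) :
    exp T₁ c = exp T₂ c := by
  rw [exp_apply_eq_tsum, exp_apply_eq_tsum]
  exact tsum_congr fun n => by rw [h]

lemma Lm_pow_apply (a c : 𝔸) (n : ℕ) : ((Lm a) ^ n) c = a ^ n * c := by
  induction n with
  | zero => simp
  | succ n ih => rw [pow_succ', ContinuousLinearMap.mul_apply, ih, Lm_apply, ← mul_assoc,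
      ← pow_succ']

lemma Rm_pow_apply (a c : 𝔸) (n : ℕ) : ((Rm a) ^ n) c = c * a ^ n := by
  induction n with
  | zero => simp
  | succ n ih => rw [pow_succ', ContinuousLinearMap.mul_apply, ih, Rm_apply, mul_assoc, ← pow_succ]

lemma exp_Lm_apply [CompleteSpace 𝔸] (a c : 𝔸) : exp (Lm a) c = exp a * c := by
  rw [exp_apply_eq_tsum]
  have hs := expSeries_summable' (𝕂 := ℂ) a
  have h2 := (Rm c).map_tsum hs
  simp only [Rm_apply, map_smul] at h2
  rw [exp_eq_tsum ℂ]
  simp only [Lm_pow_apply]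
  simpa using h2.symm

lemma exp_Rm_apply [CompleteSpace 𝔸] (a c : 𝔸) : exp (Rm a) c = c * exp a := by
  rw [exp_apply_eq_tsum]
  have hs := expSeries_summable' (𝕂 := ℂ) a
  have h2 := (Lm c).map_tsum hs
  simp only [Lm_apply, map_smul] at h2
  rw [exp_eq_tsum ℂ]
  simp only [Rm_pow_apply]
  simpa using h2.symm

lemma exp_conj_eq [CompleteSpace 𝔸] (a c : 𝔸) :
    exp a * c * exp (-a) = exp (Lm a - Rm a) c := by
  have hneg : -(Rm a) = Rm (-a) := by ext x; simp
  have hcomm : Commute (Lm a) (-(Rm a)) := by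
    rw [hneg]; ext x; simp [ContinuousLinearMap.mul_apply, mul_assoc]
  rw [sub_eq_add_neg, exp_add_of_commute_of_mem_ball (𝕂 := ℂ) hcomm
      ((expSeries_radius_eq_top ℂ (𝔸 →L[ℂ] 𝔸)).symm ▸ edist_lt_top _ _)
      ((expSeries_radius_eq_top ℂ (𝔸 →L[ℂ] 𝔸)).symm ▸ edist_lt_top _ _), ContinuousLinearMap.mul_apply, hneg,
    exp_Rm_apply, exp_Lm_apply, mul_assoc]

lemma ad_pow (A C : 𝔸) (n : ℕ) :
    ((Lm A - Rm A) ^ n) C = (fun X => ⁅A, X⁆)^[n] C := by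
  induction n with
  | zero => simp
  | succ n ih =>
    rw [Function.iterate_succ_apply', pow_succ', ContinuousLinearMap.mul_apply, ih]
    simp [Ring.lie_def, ContinuousLinearMap.sub_apply]

lemma key_pow (A S C : 𝔸) (h : ∀ j : ℕ, ⁅(fun X => ⁅A, X⁆)^[j] C, S⁆ = 0) (n : ℕ) :
    ((Lm (A + S) - Rm (A + S)) ^ n) C = ((Lm A - Rm A) ^ n) C := by
  induction n with
  | zero => simp
  | succ n ih =>
    rw [pow_succ', pow_succ', ContinuousLinearMap.mul_apply, ContinuousLinearMap.mul_apply, ih]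
    set X := ((Lm A - Rm A) ^ n) C with hX
    have hcomm : S * X = X * S := by
      have h2 := h n
      rw [Ring.lie_def, sub_eq_zero] at h2
      rw [← ad_pow] at h2
      exact h2.symm
    simp only [ContinuousLinearMap.sub_apply, Lm_apply, Rm_apply, add_mul, mul_add]
    rw [hcomm]
    abel

lemma smul_ad_iterate (s : ℂ) (A C : 𝔸) (j : ℕ) :
    (fun X => ⁅s • A, X⁆)^[j] C = s ^ j • (fun X => ⁅A, X⁆)^[j] C := by
  induction j with
  | zero => simp
  | succ j ih =>
    rw [Function.iterate_succ_apply', Function.iterate_succ_apply', ih, Ring.lie_def,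
      Ring.lie_def, pow_succ]
    rw [smul_mul_assoc, smul_mul_assoc, mul_smul_comm, mul_smul_comm, smul_smul, smul_smul,
      mul_comm s (s ^ j), ← smul_sub]

lemma exp_conj_congr [CompleteSpace 𝔸] (A S C : 𝔸)
    (h : ∀ j : ℕ, ⁅(fun X => ⁅A, X⁆)^[j] C, S⁆ = 0) (s : ℂ) :
    exp (Lm (s • (A + S)) - Rm (s • (A + S))) C = exp (Lm (s • A) - Rm (s • A)) C := by
  have h' : ∀ j : ℕ, ⁅(fun X => ⁅s • A, X⁆)^[j] C, s • S⁆ = 0 := by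
    intro j
    rw [smul_ad_iterate, Ring.lie_def, smul_mul_assoc, mul_smul_comm, smul_mul_assoc,
      mul_smul_comm, smul_smul, smul_smul, mul_comm s (s ^ j), ← smul_sub, ← Ring.lie_def,
      h j, smul_zero]
  have := exp_eval_congr (T₁ := Lm (s • A + s • S) - Rm (s • A + s • S))
    (T₂ := Lm (s • A) - Rm (s • A)) C (key_pow (s • A) (s • S) C h')
  rw [smul_add]
  exact this

end BanachAlg

/-- If the skew-adjoint interaction `S` commutes with all iterated `ad A`-brackets of the
coherence operator `C`, then the scalar map `y(ξ) = ⟪ξ, C ξ⟫` along the evolution generated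
by `A + S` coincides with its value along the evolution generated by `A` alone. -/
theorem scalar_map_decoupled_from_interaction (E : Type*) [NormedAddCommGroup E]
    [InnerProductSpace ℂ E] [CompleteSpace E] (A S C : E →L[ℂ] E)
    (hA : ContinuousLinearMap.adjoint A = -A) (hS : ContinuousLinearMap.adjoint S = -S)
    (h : ∀ j : ℕ, ⁅(fun X => ⁅A, X⁆)^[j] C, S⁆ = 0) :
    ∀ (t : ℝ) (x : E),
      (inner ℂ (exp (t • (A + S)) x) (C (exp (t • (A + S)) x)) : ℂ) =
        (inner ℂ (exp (t • A) x) (C (exp (t • A) x)) : ℂ) := by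
  intro t x
  have hsmul : ∀ B : E →L[ℂ] E, t • B = (t : ℂ) • B := fun B => by
    rw [← algebraMap_smul ℂ t B]; norm_num
  -- a skew-adjoint operator B gives star (exp (s • B)) = exp (-(s • B)) for real s
  have hstar : ∀ B : E →L[ℂ] E, ContinuousLinearMap.adjoint B = -B →
      star (exp ((t : ℂ) • B)) = exp (-((t : ℂ) • B)) := by
    intro B hB
    rw [star_exp, star_smul, Complex.star_def, Complex.conj_ofReal,
      ContinuousLinearMap.star_eq_adjoint, hB, smul_neg]
  -- rewrite inner products through the adjoint
  have key : ∀ B : E →L[ℂ] E, ContinuousLinearMap.adjoint B = -B →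
      (inner ℂ (exp ((t : ℂ) • B) x) (C (exp ((t : ℂ) • B) x)) : ℂ) =
        inner ℂ x ((exp (Lm (-((t : ℂ) • B)) - Rm (-((t : ℂ) • B))) C) x) := by
    intro B hB
    rw [← ContinuousLinearMap.adjoint_inner_right (exp ((t : ℂ) • B)) x
      (C (exp ((t : ℂ) • B) x)), ← ContinuousLinearMap.star_eq_adjoint, hstar B hB]
    have hconj := exp_conj_eq (-((t : ℂ) • B)) C
    rw [neg_neg] at hconj
    rw [← hconj]
    rfl
  rw [hsmul, hsmul, key (A + S) (by rw [map_add, hA, hS, neg_add]), key A hA]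
  have := exp_conj_congr A S C h (-(t : ℂ))
  rw [neg_smul, neg_smul] at this
  rw [this]
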